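/- Let G be a finite abelian group of order n = 2k+1 (odd, k ≥ 1) and let T be a tree on n vertices. Then T admits a G-irregular edge labelling, i.e., there exists f : E(T) → G such that the vertex sums w(v) = Σ_{e ∋ v} f(e) are pairwise distinct (in fact, they realize all elements of G). -/

import Mathlib

open Finset

private lemma myAux.no_two_torsion {A : Type} [AddGroup A] [Fintype A]
    (hodd : Odd (Fintype.card A)) {a : A} (h : a + a = 0) : a = 0 := by
  have h2 : addOrderOf a ∣ 2 := addOrderOf_dvd_of_nsmul_eq_zero (by rw [two_nsmul]; exact h)
  have hc : addOrderOf a ∣ Fintype.card A := addOrderOf_dvd_card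
  have hg : Nat.Coprime 2 (Fintype.card A) := Nat.coprime_two_left.2 hodd
  have h1 : addOrderOf a = 1 := Nat.eq_one_of_dvd_coprimes hg h2 hc
  exact AddMonoid.addOrderOf_eq_one_iff.1 h1

private lemma myAux.exists_neg_closed {A : Type} [AddCommGroup A] [Fintype A] [DecidableEq A]
    (hodd : Odd (Fintype.card A)) :
    ∀ m : ℕ, 2 * m ≤ Fintype.card A →
      ∃ S : Finset A, S.card = 2 * m ∧ (0 : A) ∉ S ∧ ∀ a ∈ S, -a ∈ S := by
  intro m
  induction m with
  | zero => intro _; exact ⟨∅, by simp⟩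
  | succ m ih =>
    intro hm
    obtain ⟨S, hcard, h0, hneg⟩ := ih (by omega)
    have hins : (insert (0 : A) S).card = 2 * m + 1 := by
      rw [Finset.card_insert_of_notMem h0, hcard]
    have hlt : (insert (0 : A) S).card < Fintype.card A := by omega
    have hne : ((insert (0:A) S)ᶜ).Nonempty := by
      rw [← Finset.card_pos, Finset.card_compl]; omega
    obtain ⟨a, ha⟩ := hne
    rw [Finset.mem_compl] at ha
    have ha0 : a ≠ 0 := fun h => ha (h ▸ Finset.mem_insert_self 0 S)
    have haS : a ∉ S := fun h => ha (Finset.mem_insert_of_mem h)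
    have hnaa : -a ≠ a := by
      intro h
      exact ha0 (myAux.no_two_torsion hodd (by nth_rewrite 1 [← h]; simp))
    have hnaS : -a ∉ S := fun h => haS (by simpa using hneg _ h)
    refine ⟨insert a (insert (-a) S), ?_, ?_, ?_⟩
    · rw [Finset.card_insert_of_notMem (by simp [hnaa.symm, haS]),
        Finset.card_insert_of_notMem hnaS, hcard]; ring
    · simp only [Finset.mem_insert]
      push_neg
      exact ⟨Ne.symm ha0, fun h => ha0 (by simpa using h.symm), h0⟩
    · intro b hb
      simp only [Finset.mem_insert] at hb ⊢
      rcases hb with rfl | rfl | hb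
      · tauto
      · simp
      · exact Or.inr (Or.inr (hneg _ hb))

private lemma myAux.exists_zero_sum {A : Type} [AddCommGroup A] [Fintype A] [DecidableEq A]
    (hodd : Odd (Fintype.card A)) (x : ℕ) (hx : x ≤ Fintype.card A) :
    ∃ S : Finset A, S.card = x ∧ ∑ a ∈ S, a = 0 := by
  have negsum : ∀ S : Finset A, (0 : A) ∉ S → (∀ a ∈ S, -a ∈ S) → ∑ a ∈ S, a = 0 := by
    intro S h0 hneg
    refine Finset.sum_involution (fun a _ => -a) (fun a _ => add_neg_cancel a) ?_ (fun a ha => hneg a ha)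
      (fun a _ => by simp)
    intro a ha hfa h
    exact hfa (myAux.no_two_torsion hodd (by nth_rewrite 2 [← h]; simp))
  rcases Nat.even_or_odd x with ⟨m, hm⟩ | ⟨m, hm⟩
  · obtain ⟨S, hc, h0, hneg⟩ := myAux.exists_neg_closed hodd m (by omega)
    exact ⟨S, by omega, negsum S h0 hneg⟩
  · obtain ⟨S, hc, h0, hneg⟩ := myAux.exists_neg_closed hodd m (by omega)
    refine ⟨insert 0 S, ?_, ?_⟩
    · rw [Finset.card_insert_of_notMem h0]; omega
    · rw [Finset.sum_insert h0, negsum S h0 hneg]; simp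

private lemma myAux.sum_univ_zero {A : Type} [AddCommGroup A] [Fintype A] [DecidableEq A]
    (hodd : Odd (Fintype.card A)) : ∑ a : A, a = 0 := by
  have h : ∑ a : A, a = ∑ a : A, -a :=
    (Fintype.sum_equiv (Equiv.neg A) _ _ (fun a => by simp)).symm
  have h2 : (∑ a : A, a) + (∑ a : A, a) = 0 := by
    nth_rewrite 2 [h]
    rw [← Finset.sum_add_distrib]
    simp
  exact myAux.no_two_torsion hodd h2

private lemma myAux.exists_injective_sums {V A : Type} [Fintype V] [DecidableEq V]
    [AddCommGroup A] [Fintype A] [DecidableEq A]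
    (hcard : Fintype.card V = Fintype.card A) (hodd : Odd (Fintype.card A)) (X : Finset V) :
    ∃ t : V → A, Function.Injective t ∧ ∑ v ∈ X, t v = 0 ∧ ∑ v ∈ Xᶜ, t v = 0 := by
  obtain ⟨S, hSc, hSs⟩ := myAux.exists_zero_sum hodd X.card
    (le_trans (le_trans (Finset.card_le_univ X) (le_of_eq (Finset.card_univ))) (le_of_eq hcard))
  have hc1 : X.card = S.card := hSc.symm
  have hc2 : (Xᶜ : Finset V).card = (Sᶜ : Finset A).card := by
    rw [Finset.card_compl, Finset.card_compl, hSc, hcard]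
  let e1 : (X : Finset V) ≃ (S : Finset A) := Finset.equivOfCardEq hc1
  let e2 : (Xᶜ : Finset V) ≃ (Sᶜ : Finset A) := Finset.equivOfCardEq hc2
  refine ⟨fun v => if h : v ∈ X then (e1 ⟨v, h⟩ : A) else (e2 ⟨v, Finset.mem_compl.2 h⟩ : A),
    ?_, ?_, ?_⟩
  · intro a b hab
    simp only at hab
    by_cases ha : a ∈ X <;> by_cases hb : b ∈ X
    · rw [dif_pos ha, dif_pos hb] at hab
      have := e1.injective (Subtype.coe_injective hab)
      exact congrArg Subtype.val this
    · rw [dif_pos ha, dif_neg hb] at hab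
      exact absurd (hab ▸ (e1 ⟨a, ha⟩).2) (Finset.mem_compl.1 (e2 ⟨b, Finset.mem_compl.2 hb⟩).2)
    · rw [dif_neg ha, dif_pos hb] at hab
      exact absurd (hab ▸ (e1 ⟨b, hb⟩).2) (Finset.mem_compl.1 (e2 ⟨a, Finset.mem_compl.2 ha⟩).2)
    · rw [dif_neg ha, dif_neg hb] at hab
      have := e2.injective (Subtype.coe_injective hab)
      exact congrArg Subtype.val this
  · rw [← Finset.sum_coe_sort X]
    have : ∀ i : (X : Finset V),
        (if h : (i : V) ∈ X then (e1 ⟨i, h⟩ : A) else (e2 ⟨i, Finset.mem_compl.2 h⟩ : A))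
          = (e1 i : A) := by
      intro i; rw [dif_pos i.2]
    rw [Finset.sum_congr rfl (fun i _ => this i)]
    rw [← Equiv.sum_comp e1.symm (fun i => (e1 i : A))]
    simp only [Equiv.apply_symm_apply]
    exact (Finset.sum_coe_sort S (fun a => a)).trans hSs
  · rw [← Finset.sum_coe_sort (Xᶜ)]
    have : ∀ i : ((Xᶜ : Finset V) : Finset V),
        (if h : (i : V) ∈ X then (e1 ⟨i, h⟩ : A) else (e2 ⟨i, Finset.mem_compl.2 h⟩ : A))
          = (e2 i : A) := by
      intro i
      rw [dif_neg (Finset.mem_compl.1 i.2)]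
    rw [Finset.sum_congr rfl (fun i _ => this i)]
    rw [← Equiv.sum_comp e2.symm (fun i => (e2 i : A))]
    simp only [Equiv.apply_symm_apply]
    rw [Finset.sum_coe_sort (Sᶜ) (fun a => a)]
    have htot : ∑ a ∈ (Sᶜ : Finset A), a = (∑ a : A, a) - ∑ a ∈ S, a := by
      rw [eq_sub_iff_add_eq, Finset.sum_compl_add_sum]
    rw [htot, hSs, myAux.sum_univ_zero hodd, sub_zero]

private def myAuxF {V A : Type} [Fintype V] [DecidableEq V] [AddCommGroup A]
    (T : SimpleGraph V) [DecidableRel T.Adj] (d : V → ℕ) (t : V → A) : ℕ → V → A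
  | 0, v => t v
  | n+1, v => t v - ∑ u ∈ (T.neighborFinset v).filter (fun u => d u = d v + 1), myAuxF T d t n u

private lemma myAuxF_stable {V A : Type} [Fintype V] [DecidableEq V] [AddCommGroup A]
    (T : SimpleGraph V) [DecidableRel T.Adj] (d : V → ℕ) (t : V → A) {C : ℕ}
    (hd : ∀ v, d v < C) :
    ∀ n v, C ≤ n + d v + 1 → myAuxF T d t (n+1) v = myAuxF T d t n v := by
  intro n
  induction n with
  | zero =>
    intro v hv
    have hemp : (T.neighborFinset v).filter (fun u => d u = d v + 1) = ∅ := by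
      rw [Finset.filter_eq_empty_iff]
      intro u _ hu
      have := hd u
      omega
    simp [myAuxF, hemp]
  | succ n ih =>
    intro v hv
    show t v - _ = t v - _
    congr 1
    refine Finset.sum_congr rfl ?_
    intro u hu
    simp only [Finset.mem_filter] at hu
    exact ih u (by omega)

private lemma myAux.tree_realization {V A : Type} [Fintype V] [DecidableEq V]
    [AddCommGroup A] [Fintype A]
    (T : SimpleGraph V) [DecidableRel T.Adj] (hT : T.IsTree)
    (hodd : Odd (Fintype.card A)) :
    ∃ d : V → ℕ, ∀ t : V → A,
      (∑ v : V, (if Even (d v) then t v else - t v)) = 0 →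
      ∃ f : Sym2 V → A, ∀ v, ∑ u ∈ T.neighborFinset v, f s(v, u) = t v := by
  classical
  have hnonempty : Nonempty V := hT.isConnected.nonempty
  obtain ⟨r⟩ := hnonempty
  haveI : Nonempty V := ⟨r⟩
  have huniq := hT.existsUnique_path
  have H : ∀ v : V, ∃ p : T.Walk v r, p.IsPath ∧ ∀ q : T.Walk v r, q.IsPath → q = p :=
    fun v => huniq v r
  choose path hpath hup using H
  set d : V → ℕ := fun v => (path v).length with hd_def
  set par : V → V := fun v => (path v).getVert 1 with hpar_def
  have hnil : path r = SimpleGraph.Walk.nil :=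
    (hup r SimpleGraph.Walk.nil SimpleGraph.Walk.IsPath.nil).symm
  have hdr : d r = 0 := by simp [hd_def, hnil]
  have hparr : par r = r := by simp [hpar_def, hnil, SimpleGraph.Walk.getVert]
  have hd_lt : ∀ v, d v < Fintype.card V := fun v => (hpath v).length_lt
  have hpar_spec : ∀ v, v ≠ r → T.Adj v (par v) ∧ d (par v) + 1 = d v := by
    intro v hv
    obtain ⟨u, hadj, q, hq⟩ := SimpleGraph.Walk.exists_eq_cons_of_ne hv (path v)
    have hu : par v = u := by
      simp [hpar_def, hq, SimpleGraph.Walk.getVert_cons_succ, SimpleGraph.Walk.getVert_zero]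
    have hqp : q.IsPath := by
      have h' := hpath v
      rw [hq, SimpleGraph.Walk.cons_isPath_iff] at h'
      exact h'.1
    have hqeq : q = path u := hup u q hqp
    refine ⟨by rw [hu]; exact hadj, ?_⟩
    rw [hu]
    have hlen : d v = q.length + 1 := by simp [hd_def, hq]
    rw [hlen, hqeq]
  have hB : ∀ v u, T.Adj v u → u ≠ par v → par u = v ∧ d u = d v + 1 := by
    intro v u hadj hne'
    have hvu : v ≠ u := hadj.ne
    by_cases hmem : u ∈ (path v).support
    · exfalso
      have hvr : v ≠ r := by
        rintro rfl
        rw [hnil] at hmem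
        simp [SimpleGraph.Walk.support_nil] at hmem
        exact hvu hmem.symm
      have hq1 : ((path v).takeUntil u hmem).IsPath := (hpath v).takeUntil hmem
      have hp1 : (SimpleGraph.Walk.cons hadj SimpleGraph.Walk.nil : T.Walk v u).IsPath := by
        rw [SimpleGraph.Walk.cons_isPath_iff]
        exact ⟨SimpleGraph.Walk.IsPath.nil, by simp [hvu]⟩
      obtain ⟨p0, hp0, hup0⟩ := huniq v u
      have e3 : (path v).takeUntil u hmem = SimpleGraph.Walk.cons hadj SimpleGraph.Walk.nil :=
        (hup0 _ hq1).trans (hup0 _ hp1).symm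
      have hspec := (path v).take_spec hmem
      rw [e3] at hspec
      apply hne'
      rw [hpar_def]
      have hgv : (path v).getVert 1 = u := by
        rw [← hspec]
        simp [SimpleGraph.Walk.cons_append, SimpleGraph.Walk.nil_append,
          SimpleGraph.Walk.getVert_cons_succ, SimpleGraph.Walk.getVert_zero]
      exact hgv.symm
    · have hWp : (SimpleGraph.Walk.cons hadj.symm (path v)).IsPath := by
        rw [SimpleGraph.Walk.cons_isPath_iff]
        exact ⟨hpath v, hmem⟩
      have hWeq : SimpleGraph.Walk.cons hadj.symm (path v) = path u := hup u _ hWp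
      constructor
      · rw [hpar_def]
        simp only [← hWeq]
        simp [SimpleGraph.Walk.getVert_cons_succ, SimpleGraph.Walk.getVert_zero]
      · simp only [hd_def, ← hWeq, SimpleGraph.Walk.length_cons]
  have hcases : ∀ v u, T.Adj v u →
      (u = par v ∧ v ≠ r ∧ d u + 1 = d v) ∨ (par u = v ∧ u ≠ r ∧ d u = d v + 1) := by
    intro v u hadj
    by_cases h : u = par v
    · left
      have hvr : v ≠ r := by
        rintro rfl
        rw [hparr] at h
        exact hadj.ne h.symm
      exact ⟨h, hvr, by rw [h]; exact (hpar_spec v hvr).2⟩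
    · obtain ⟨h1, h2⟩ := hB v u hadj h
      refine Or.inr ⟨h1, ?_, h2⟩
      rintro rfl
      rw [hdr] at h2
      omega
  have hparity : ∀ v u, T.Adj v u → (Even (d v) ↔ ¬ Even (d u)) := by
    intro v u hadj
    rcases hcases v u hadj with ⟨_, _, h⟩ | ⟨_, _, h⟩
    · rw [← h, Nat.even_add_one]
    · rw [h, Nat.even_add_one]
      tauto
  refine ⟨d, ?_⟩
  intro t ht
  set g : V → A := myAuxF T d t (Fintype.card V) with hg_def
  have hgrec : ∀ v, g v
      = t v - ∑ u ∈ (T.neighborFinset v).filter (fun u => d u = d v + 1), g u := by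
    intro v
    obtain ⟨m, hm⟩ : ∃ m, Fintype.card V = m + 1 :=
      ⟨Fintype.card V - 1, by have := Fintype.card_pos (α := V); omega⟩
    have h1 : g v = t v - ∑ u ∈ (T.neighborFinset v).filter (fun u => d u = d v + 1),
        myAuxF T d t m u := by
      rw [hg_def, hm]; rfl
    rw [h1]
    congr 1
    refine Finset.sum_congr rfl ?_
    intro u hu
    have hst : myAuxF T d t (m + 1) u = myAuxF T d t m u :=
      myAuxF_stable T d t hd_lt m u (by omega)
    rw [hg_def, hm]
    exact hst.symm
  set f : Sym2 V → A :=
    fun e => if h : ∃ w, w ≠ r ∧ e = s(w, par w) then g h.choose else 0 with hf_def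
  have hf1 : ∀ v, v ≠ r → f s(v, par v) = g v := by
    intro v hv
    have hx : ∃ w, w ≠ r ∧ s(v, par v) = s(w, par w) := ⟨v, hv, rfl⟩
    simp only [hf_def]
    rw [dif_pos hx]
    obtain ⟨hwr, hwe⟩ := hx.choose_spec
    rcases Sym2.eq_iff.1 hwe with ⟨h1, _⟩ | ⟨h1, h2⟩
    · rw [← h1]
    · have hv2 := (hpar_spec v hv).2
      have hw2 := (hpar_spec _ hwr).2
      rw [h2] at hv2
      rw [← h1] at hw2
      omega
  have hf2 : ∀ v u, T.Adj v u → f s(v, u) = (if u = par v then g v else g u) := by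
    intro v u hadj
    by_cases h : u = par v
    · rw [if_pos h]
      have hvr : v ≠ r := by
        rintro rfl
        rw [hparr] at h
        exact hadj.ne h.symm
      rw [h]
      exact hf1 v hvr
    · rw [if_neg h]
      obtain ⟨h1, h2⟩ := hB v u hadj h
      have hur : u ≠ r := by
        rintro rfl
        rw [hdr] at h2
        omega
      have hsw : s(v, u) = s(u, par u) := by rw [h1]; exact Sym2.eq_swap
      rw [hsw]
      exact hf1 u hur
  have hwt_ne : ∀ v, v ≠ r → (∑ u ∈ T.neighborFinset v, f s(v, u)) = t v := by
    intro v hv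
    obtain ⟨hadj, hdpar⟩ := hpar_spec v hv
    have hmem : par v ∈ T.neighborFinset v := (T.mem_neighborFinset v (par v)).2 hadj
    have herase : (T.neighborFinset v).erase (par v)
        = (T.neighborFinset v).filter (fun u => d u = d v + 1) := by
      ext u
      simp only [Finset.mem_erase, Finset.mem_filter, SimpleGraph.mem_neighborFinset]
      constructor
      · rintro ⟨hne', hadj'⟩
        exact ⟨hadj', (hB v u hadj' hne').2⟩
      · rintro ⟨hadj', hd'⟩
        refine ⟨fun he => ?_, hadj'⟩
        rw [he] at hd'
        omega
    rw [← Finset.add_sum_erase _ _ hmem, hf2 v (par v) hadj, if_pos rfl, herase]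
    have hall : ∀ u ∈ (T.neighborFinset v).filter (fun u => d u = d v + 1),
        f s(v, u) = g u := by
      intro u hu
      simp only [Finset.mem_filter, SimpleGraph.mem_neighborFinset] at hu
      rw [hf2 v u hu.1, if_neg]
      intro he
      rw [he] at hu
      have := hu.2
      omega
    rw [Finset.sum_congr rfl hall, hgrec v]
    abel
  have hwt_r : (∑ u ∈ T.neighborFinset r, f s(r, u)) = t r - g r := by
    have hall : ∀ u ∈ T.neighborFinset r, f s(r, u) = g u := by
      intro u hu
      rw [SimpleGraph.mem_neighborFinset] at hu
      rw [hf2 r u hu, if_neg]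
      intro he
      rw [hparr] at he
      exact hu.ne he.symm
    rw [Finset.sum_congr rfl hall]
    have hfil : (T.neighborFinset r).filter (fun u => d u = d r + 1) = T.neighborFinset r := by
      rw [Finset.filter_eq_self]
      intro u hu
      rw [SimpleGraph.mem_neighborFinset] at hu
      exact (hB r u hu (by rw [hparr]; exact hu.ne')).2
    have hgr := hgrec r
    rw [hfil] at hgr
    rw [hgr]
    abel
  have hswap : ∀ F : V → V → A,
      (∑ v : V, ∑ u ∈ T.neighborFinset v, F v u)
        = ∑ v : V, ∑ u ∈ T.neighborFinset v, F u v := by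
    intro F
    have key : ∀ G : V → V → A,
        (∑ v : V, ∑ u ∈ T.neighborFinset v, G v u)
          = ∑ v : V, ∑ u : V, (if T.Adj v u then G v u else 0) := by
      intro G
      refine Finset.sum_congr rfl fun v _ => ?_
      rw [SimpleGraph.neighborFinset_eq_filter, Finset.sum_filter]
    rw [key F, key (fun v u => F u v), Finset.sum_comm]
    refine Finset.sum_congr rfl fun v _ => Finset.sum_congr rfl fun u _ => ?_
    exact if_congr (T.adj_comm u v) rfl rfl
  set S : A := ∑ v : V, (if Even (d v) then (∑ u ∈ T.neighborFinset v, f s(v, u))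
      else -(∑ u ∈ T.neighborFinset v, f s(v, u))) with hS_def
  have hS1 : S = ∑ v : V, ∑ u ∈ T.neighborFinset v,
      (if Even (d v) then f s(v, u) else - f s(v, u)) := by
    rw [hS_def]
    refine Finset.sum_congr rfl fun v _ => ?_
    split_ifs with h
    · rfl
    · rw [Finset.sum_neg_distrib]
  have hS2 : S = ∑ v : V, ∑ u ∈ T.neighborFinset v,
      (if Even (d u) then f s(u, v) else - f s(u, v)) :=
    hS1.trans (hswap _)
  have hSS : S + S = 0 := by
    nth_rewrite 1 [hS1]
    nth_rewrite 1 [hS2]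
    rw [← Finset.sum_add_distrib]
    rw [Finset.sum_congr rfl fun v _ => (Finset.sum_add_distrib).symm]
    refine Finset.sum_eq_zero fun v _ => Finset.sum_eq_zero fun u hu => ?_
    rw [SimpleGraph.mem_neighborFinset] at hu
    have hpar' := hparity v u hu
    have hsw : s(u, v) = s(v, u) := Sym2.eq_swap
    by_cases h : Even (d v)
    · rw [if_pos h, if_neg (hpar'.1 h), hsw]
      exact add_neg_cancel _
    · have hdu : Even (d u) := by
        by_contra hdu
        exact h (hpar'.2 hdu)
      rw [if_neg h, if_pos hdu, hsw]
      exact neg_add_cancel _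
  have hS0 : S = 0 := myAux.no_two_torsion hodd hSS
  have hdiff : ∑ v : V, (if Even (d v)
      then ((∑ u ∈ T.neighborFinset v, f s(v, u)) - t v)
      else -((∑ u ∈ T.neighborFinset v, f s(v, u)) - t v)) = 0 := by
    have hsplit : ∀ v : V, (if Even (d v)
        then ((∑ u ∈ T.neighborFinset v, f s(v, u)) - t v)
        else -((∑ u ∈ T.neighborFinset v, f s(v, u)) - t v))
        = (if Even (d v) then (∑ u ∈ T.neighborFinset v, f s(v, u))
            else -(∑ u ∈ T.neighborFinset v, f s(v, u)))
          - (if Even (d v) then t v else - t v) := by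
      intro v
      split_ifs
      · rfl
      · abel
    rw [Finset.sum_congr rfl fun v _ => hsplit v, Finset.sum_sub_distrib, ← hS_def, hS0, ht,
      sub_zero]
  have hsingle : ∑ v : V, (if Even (d v)
      then ((∑ u ∈ T.neighborFinset v, f s(v, u)) - t v)
      else -((∑ u ∈ T.neighborFinset v, f s(v, u)) - t v))
      = (∑ u ∈ T.neighborFinset r, f s(r, u)) - t r := by
    rw [Finset.sum_eq_single r]
    · rw [if_pos (by rw [hdr]; exact Even.zero)]
    · intro v _ hv
      rw [hwt_ne v hv, sub_self]
      split_ifs <;> simp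
    · intro h
      exact absurd (Finset.mem_univ r) h
  rw [hsingle] at hdiff
  refine ⟨f, ?_⟩
  intro v
  by_cases hv : v = r
  · subst hv
    exact sub_eq_zero.1 hdiff
  · exact hwt_ne v hv

/-- Every tree on `n = 2k+1` vertices (`k ≥ 1`) admits a `G`-irregular labelling for every
finite abelian group `G` of order `n`. -/
theorem tree_irregular_labelling_odd_order
    {V A : Type} [Fintype V] [DecidableEq V] [AddCommGroup A] [Fintype A]
    (T : SimpleGraph V) [DecidableRel T.Adj] (hT : T.IsTree)
    (k : ℕ) (hk : 1 ≤ k) (hV : Fintype.card V = 2 * k + 1)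
    (hA : Fintype.card A = 2 * k + 1) :
    ∃ f : Sym2 V → A,
      Function.Injective (fun v : V => ∑ u ∈ T.neighborFinset v, f s(v, u)) := by
  classical
  have hodd : Odd (Fintype.card A) := by rw [hA]; exact ⟨k, by ring⟩
  obtain ⟨d, hd⟩ := myAux.tree_realization T hT hodd
  set X : Finset V := Finset.univ.filter (fun v => Even (d v)) with hX_def
  obtain ⟨t, ht1, ht2, ht3⟩ :=
    myAux.exists_injective_sums (hV.trans hA.symm) hodd X
  have hconstraint : (∑ v : V, (if Even (d v) then t v else - t v)) = 0 := by
    rw [Finset.sum_ite]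
    have h1 : Finset.univ.filter (fun v => ¬ Even (d v)) = Xᶜ := by
      rw [hX_def, Finset.compl_filter]
    rw [h1, ← hX_def, Finset.sum_neg_distrib, ht2, ht3, neg_zero, add_zero]
  obtain ⟨f, hf⟩ := hd t hconstraint
  refine ⟨f, ?_⟩
  have : (fun v : V => ∑ u ∈ T.neighborFinset v, f s(v, u)) = t := funext hf
  rw [this]
  exact ht1
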